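/- Let n ≥ 2 be an integer and regard ℤ_n as a ℤ-module. Two distinct nontrivial ideals m₁ℤ and m₂ℤ of ℤ (with m₁, m₂ ≥ 2) are adjacent in the ℤ_n-intersection graph G_{ℤ_n}(ℤ) if and only if n does not divide lcm(m₁, m₂). -/

import Mathlib

/-- The `M`-intersection graph of ideals of `R`: vertices are the nontrivial ideals of `R`,
and two distinct vertices `I`, `J` are adjacent iff `IM ∩ JM ≠ 0`. -/
def interGraph (R M : Type*) [CommRing R] [AddCommGroup M] [Module R M] :
    SimpleGraph {I : Ideal R // I ≠ ⊥ ∧ I ≠ ⊤} where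
  Adj I J := I ≠ J ∧ (I.1 • ⊤ ⊓ J.1 • ⊤ : Submodule R M) ≠ ⊥
  symm := ⟨fun I J h => ⟨h.1.symm, by rw [inf_comm]; exact h.2⟩⟩
  loopless := ⟨fun I h => h.1 rfl⟩

lemma mem_smul_top_iff (m n : ℕ) [NeZero n] (x : ZMod n) :
    x ∈ (Ideal.span {(m:ℤ)}) • (⊤ : Submodule ℤ (ZMod n)) ↔ ∃ y, (m:ZMod n) * y = x := by
  rw [Submodule.ideal_span_singleton_smul, ← SetLike.mem_coe, Submodule.coe_pointwise_smul,
    Set.mem_smul_set]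
  simp

lemma exists_mul_iff (m n : ℕ) (hn : 0 < n) (x : ZMod n) :
    (∃ y, (m:ZMod n) * y = x) ↔ Nat.gcd m n ∣ x.val := by
  haveI : NeZero n := ⟨hn.ne'⟩
  constructor
  · rintro ⟨y, rfl⟩
    have : ((m : ZMod n) * y) = ((m * y.val : ℕ) : ZMod n) := by
      push_cast [ZMod.natCast_val, ZMod.cast_id]
      rfl
    rw [this, ZMod.val_natCast]
    exact (Nat.dvd_mod_iff (Nat.gcd_dvd_right m n)).2
      (Dvd.dvd.mul_right (Nat.gcd_dvd_left m n) _)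
  · rintro ⟨k, hk⟩
    set g := Nat.gcd m n with hg
    have hbez : (g : ℤ) = m * Nat.gcdA m n + n * Nat.gcdB m n := Nat.gcd_eq_gcd_ab m n
    refine ⟨((Nat.gcdA m n : ℤ) : ZMod n) * k, ?_⟩
    have h1 : ((g : ℕ) : ZMod n) = (m : ZMod n) * ((Nat.gcdA m n : ℤ) : ZMod n) := by
      have := congrArg (fun z : ℤ => (z : ZMod n)) hbez
      push_cast at this ⊢
      simpa [ZMod.natCast_self] using this
    have h2 : x = ((g * k : ℕ) : ZMod n) := by
      rw [← hk, ZMod.natCast_val, ZMod.cast_id]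
    rw [h2]
    push_cast
    rw [h1]; ring

lemma n_dvd_lcm_gcd (m₁ m₂ n : ℕ) (h1 : 0 < m₁) (h2 : 0 < m₂) (hn : 0 < n)
    (h : n ∣ Nat.lcm m₁ m₂) : n ∣ Nat.lcm (Nat.gcd m₁ n) (Nat.gcd m₂ n) := by
  have hg1 : 0 < Nat.gcd m₁ n := Nat.gcd_pos_of_pos_left n h1
  have hg2 : 0 < Nat.gcd m₂ n := Nat.gcd_pos_of_pos_left n h2
  have hl : 0 < Nat.lcm (Nat.gcd m₁ n) (Nat.gcd m₂ n) :=
    Nat.pos_of_ne_zero (Nat.lcm_ne_zero hg1.ne' hg2.ne')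
  rw [← Nat.factorization_le_iff_dvd hn.ne' hl.ne']
  intro p
  rw [Nat.factorization_lcm hg1.ne' hg2.ne']
  have := (Nat.factorization_le_iff_dvd hn.ne' (Nat.lcm_ne_zero h1.ne' h2.ne')).2 h p
  rw [Nat.factorization_lcm h1.ne' h2.ne'] at this
  rw [Nat.factorization_gcd h1.ne' hn.ne', Nat.factorization_gcd h2.ne' hn.ne']
  simp only [Finsupp.sup_apply, Finsupp.inf_apply] at *
  omega

/-- For `n ≥ 2`, regarding `ℤ_n` as a `ℤ`-module, two distinct nontrivial
ideals `m₁ℤ`, `m₂ℤ` (with `m₁, m₂ ≥ 2`) are adjacent in `G_{ℤ_n}(ℤ)` iff `n ∤ lcm(m₁, m₂)`. -/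
theorem adj_iff_not_dvd_lcm_int (n : ℕ) (hn : 2 ≤ n)
    (m₁ m₂ : ℕ) (hm₁ : 2 ≤ m₁) (hm₂ : 2 ≤ m₂) (hne : m₁ ≠ m₂)
    (I J : {I : Ideal ℤ // I ≠ ⊥ ∧ I ≠ ⊤})
    (hI : I.1 = Ideal.span {(m₁ : ℤ)}) (hJ : J.1 = Ideal.span {(m₂ : ℤ)}) :
    (interGraph ℤ (ZMod n)).Adj I J ↔ ¬ (n ∣ Nat.lcm m₁ m₂) := by
  haveI : NeZero n := ⟨by omega⟩
  have hn0 : 0 < n := by omega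
  have hIJ : I ≠ J := by
    intro h
    rw [h, hJ] at hI
    rw [Ideal.span_singleton_eq_span_singleton, Int.associated_iff] at hI
    omega
  show (I ≠ J ∧ _) ↔ _
  rw [hI, hJ]
  simp only [ne_eq, hIJ, not_false_eq_true, true_and]
  constructor
  · -- inf ≠ ⊥ → ¬ n ∣ lcm
    intro hne0 hdvd
    apply hne0
    rw [eq_bot_iff]
    intro x hx
    obtain ⟨hx1, hx2⟩ := Submodule.mem_inf.1 hx
    have d1 := (exists_mul_iff m₁ n hn0 x).1 ((mem_smul_top_iff m₁ n x).1 hx1)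
    have d2 := (exists_mul_iff m₂ n hn0 x).1 ((mem_smul_top_iff m₂ n x).1 hx2)
    have hdl : Nat.lcm (Nat.gcd m₁ n) (Nat.gcd m₂ n) ∣ x.val := Nat.lcm_dvd d1 d2
    have hnx : n ∣ x.val :=
      (n_dvd_lcm_gcd m₁ m₂ n (by omega) (by omega) hn0 hdvd).trans hdl
    have : x.val = 0 := Nat.eq_zero_of_dvd_of_lt hnx (ZMod.val_lt x) |> fun h => h
    simpa [Submodule.mem_bot, ← ZMod.val_eq_zero] using
      Nat.eq_zero_of_dvd_of_lt hnx (x.val_lt) 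
  · -- ¬ n ∣ lcm → inf ≠ ⊥
    intro hndvd hbot
    set L := Nat.lcm m₁ m₂ with hL
    have hLmem : (L : ZMod n) ∈
        (Ideal.span {(m₁:ℤ)} • ⊤ ⊓ Ideal.span {(m₂:ℤ)} • ⊤ : Submodule ℤ (ZMod n)) := by
      refine Submodule.mem_inf.2 ⟨?_, ?_⟩
      · rw [mem_smul_top_iff, exists_mul_iff m₁ n hn0]
        rw [ZMod.val_natCast]
        exact (Nat.dvd_mod_iff (Nat.gcd_dvd_right m₁ n)).2
          ((Nat.gcd_dvd_left m₁ n).trans (Nat.dvd_lcm_left m₁ m₂))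
      · rw [mem_smul_top_iff, exists_mul_iff m₂ n hn0]
        rw [ZMod.val_natCast]
        exact (Nat.dvd_mod_iff (Nat.gcd_dvd_right m₂ n)).2
          ((Nat.gcd_dvd_left m₂ n).trans (Nat.dvd_lcm_right m₁ m₂))
    rw [hbot, Submodule.mem_bot] at hLmem
    exact hndvd ((ZMod.natCast_eq_zero_iff L n).1 hLmem)
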